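/- Let H be a Hopf algebra over a field k, let R ∈ H⊗H be invertible with R·Δ(h) = Δᵒᵖ(h)·R for all h ∈ H (where Δᵒᵖ is Δ followed by the flip), (Δ⊗id)(R) = R₁₃R₂₃, (id⊗Δ)(R) = R₁₃R₁₂, and R·(S⊗id)(R) = 1⊗1, and let g ∈ H be group-like (Δ(g) = g⊗g, ε(g) = 1) with g·S²(h) = h·g for all h ∈ H. Set P := R₂₁·R·(g⊗1) ∈ H⊗H and Φ_P(φ) = (φ⊗id)(P). Then for all trace forms φ, ψ ∈ H* (i.e., φ(ab) = φ(ba) and ψ(ab) = ψ(ba) for all a, b ∈ H): Φ_P(φ) lies in the center Z(H) of H, and Φ_P(φ*ψ) = Φ_P(φ)·Φ_P(ψ), where * is the convolution product on H*. -/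

import Mathlib

open TensorProduct
noncomputable section

def antip (k H : Type*) [Field k] [Ring H] [HopfAlgebra k H] : H →ₗ[k] H :=
  HopfAlgebra.antipode (R := k)

def antipSq (k H : Type*) [Field k] [Ring H] [HopfAlgebra k H] : H →ₗ[k] H :=
  antip k H ∘ₗ antip k H

/-- The convolution product on `H*`. -/
def conv (k H : Type*) [Field k] [Ring H] [Bialgebra k H]
    (φ ψ : H →ₗ[k] k) : H →ₗ[k] k :=
  LinearMap.mul' k k ∘ₗ TensorProduct.map φ ψ ∘ₗ Coalgebra.comul

/-- `Φ_P(ξ) = (ξ ⊗ id)(P)`. -/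
def PhiP (k H : Type*) [Field k] [Ring H] [HopfAlgebra k H]
    (P : H ⊗[k] H) (ξ : H →ₗ[k] k) : H :=
  TensorProduct.lid k H (TensorProduct.map ξ LinearMap.id P)

section Aux
variable {k H : Type*} [Field k] [Ring H] [HopfAlgebra k H]

open Coalgebra HopfAlgebra

local notation "S" => HopfAlgebra.antipode (R := k) (A := H)
local notation "ε" => Coalgebra.counit (R := k) (A := H)
local notation "Δ" => Coalgebra.comul (R := k) (A := H)
local notation "μ" => LinearMap.mul' k H

lemma myantipode_one : S (1 : H) = 1 := by
  have := HopfAlgebra.mul_antipode_rTensor_comul_apply (R := k) (A := H) 1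
  rw [Bialgebra.comul_one] at this
  simpa [Algebra.TensorProduct.one_def, Bialgebra.counit_one] using this

lemma sum_counit_smul_right {ι : Type*} {a : H} (r : Repr k a ι) :
    ∑ i ∈ r.index, ε (r.left i) • r.right i = a := by
  have h := Coalgebra.sum_counit_tmul_eq r
  have := congrArg (TensorProduct.lid k H) h
  simp only [map_sum, TensorProduct.lid_tmul, one_smul] at this
  exact this

lemma sum_counit_smul_left {ι : Type*} {a : H} (r : Repr k a ι) :
    ∑ i ∈ r.index, ε (r.right i) • r.left i = a := by
  have h := Coalgebra.sum_tmul_counit_eq r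
  have := congrArg (TensorProduct.rid k H) h
  simp only [map_sum, TensorProduct.rid_tmul, one_smul] at this
  exact this

lemma sum_counit_right_smul {ι : Type*} {c : H} (r : Repr k c ι) (f : H →ₗ[k] H) :
    ∑ i ∈ r.index, ε (r.right i) • f (r.left i) = f c := by
  conv_rhs => rw [← sum_counit_smul_left r]
  rw [map_sum]
  exact Finset.sum_congr rfl fun i _ => (map_smul f _ _).symm

lemma sum_counit_left_smul {ι : Type*} {c : H} (r : Repr k c ι) (f : H →ₗ[k] H) :
    ∑ i ∈ r.index, ε (r.left i) • f (r.right i) = f c := by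
  conv_rhs => rw [← sum_counit_smul_right r]
  rw [map_sum]
  exact Finset.sum_congr rfl fun i _ => (map_smul f _ _).symm

lemma sandwich_lr {ι : Type*} {c : H} (r : Repr k c ι) (y : H) :
    ∑ i ∈ r.index, r.left i * (S (r.right i) * y) = ε c • y := by
  have h := HopfAlgebra.sum_mul_antipode_eq_smul r
  calc ∑ i ∈ r.index, r.left i * (S (r.right i) * y)
      = (∑ i ∈ r.index, r.left i * S (r.right i)) * y := by
        rw [Finset.sum_mul]; exact Finset.sum_congr rfl fun i _ => (mul_assoc _ _ _).symm
    _ = ε c • y := by rw [h, smul_mul_assoc, one_mul]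

lemma sandwich_rl {ι : Type*} {c : H} (r : Repr k c ι) (y : H) :
    ∑ i ∈ r.index, S (r.left i) * (r.right i * y) = ε c • y := by
  have h := HopfAlgebra.sum_antipode_mul_eq_smul r
  calc ∑ i ∈ r.index, S (r.left i) * (r.right i * y)
      = (∑ i ∈ r.index, S (r.left i) * r.right i) * y := by
        rw [Finset.sum_mul]; exact Finset.sum_congr rfl fun i _ => (mul_assoc _ _ _).symm
    _ = ε c • y := by rw [h, smul_mul_assoc, one_mul]

def Repr.mulRepr {ι κ : Type*} {x y : H} (r1 : Repr k x ι) (r2 : Repr k y κ) : Repr k (x * y) (ι × κ) where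
  index := r1.index ×ˢ r2.index
  left := fun p => r1.left p.1 * r2.left p.2
  right := fun p => r1.right p.1 * r2.right p.2
  eq := by
    rw [Bialgebra.comul_mul, ← r1.eq, ← r2.eq, Finset.sum_mul_sum, Finset.sum_product]
    exact Finset.sum_congr rfl fun i _ => Finset.sum_congr rfl fun j _ =>
      (Algebra.TensorProduct.tmul_mul_tmul ..).symm

@[simp] lemma Repr.mulRepr_index {ι κ : Type*} {x y : H} (r1 : Repr k x ι) (r2 : Repr k y κ) :
    (Repr.mulRepr r1 r2).index = r1.index ×ˢ r2.index := rfl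

@[simp] lemma Repr.mulRepr_left {ι κ : Type*} {x y : H} (r1 : Repr k x ι) (r2 : Repr k y κ) (p) :
    (Repr.mulRepr r1 r2).left p = r1.left p.1 * r2.left p.2 := rfl

@[simp] lemma Repr.mulRepr_right {ι κ : Type*} {x y : H} (r1 : Repr k x ι) (r2 : Repr k y κ) (p) :
    (Repr.mulRepr r1 r2).right p = r1.right p.1 * r2.right p.2 := rfl

lemma coassoc_transport {ι : Type*} {κ Λ : ι → Type*} {c : H} (r : Repr k c ι)
    (r1 : ∀ i : ι, Repr k (r.left i) (κ i))
    (r2 : ∀ i : ι, Repr k (r.right i) (Λ i)) {M : Type*} [AddCommMonoid M] [Module k M]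
    (θ : H ⊗[k] (H ⊗[k] H) →ₗ[k] M) :
    ∑ i ∈ r.index, ∑ p ∈ (r1 i).index,
        θ ((r1 i).left p ⊗ₜ[k] ((r1 i).right p ⊗ₜ[k] r.right i))
      = ∑ i ∈ r.index, ∑ p ∈ (r2 i).index,
        θ (r.left i ⊗ₜ[k] ((r2 i).left p ⊗ₜ[k] (r2 i).right p)) := by
  have E := Coalgebra.sum_tmul_tmul_eq r r1 r2
  have := congrArg θ E
  simpa only [map_sum] using this

def trip (f g h : H →ₗ[k] H) : H ⊗[k] (H ⊗[k] H) →ₗ[k] H :=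
  μ ∘ₗ TensorProduct.map f (μ ∘ₗ TensorProduct.map g h)

lemma trip_tmul (f g h : H →ₗ[k] H) (u v w : H) :
    trip f g h (u ⊗ₜ[k] (v ⊗ₜ[k] w)) = f u * (g v * h w) := by
  simp [trip]

lemma sum4_swap {α γ M : Type*} {β : α → Type*} {δ : γ → Type*} [AddCommMonoid M]
    (I : Finset α) (P : (i : α) → Finset (β i)) (J : Finset γ) (Q : (j : γ) → Finset (δ j))
    (f : (i : α) → β i → (j : γ) → δ j → M) :
    ∑ i ∈ I, ∑ p ∈ P i, ∑ j ∈ J, ∑ q ∈ Q j, f i p j q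
      = ∑ j ∈ J, ∑ q ∈ Q j, ∑ i ∈ I, ∑ p ∈ P i, f i p j q := by
  calc
    ∑ i ∈ I, ∑ p ∈ P i, ∑ j ∈ J, ∑ q ∈ Q j, f i p j q
        = ∑ i ∈ I, ∑ j ∈ J, ∑ p ∈ P i, ∑ q ∈ Q j, f i p j q :=
          Finset.sum_congr rfl fun i _ => Finset.sum_comm
    _ = ∑ j ∈ J, ∑ i ∈ I, ∑ p ∈ P i, ∑ q ∈ Q j, f i p j q := Finset.sum_comm
    _ = ∑ j ∈ J, ∑ i ∈ I, ∑ q ∈ Q j, ∑ p ∈ P i, f i p j q :=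
          Finset.sum_congr rfl fun j _ => Finset.sum_congr rfl fun i _ => Finset.sum_comm
    _ = ∑ j ∈ J, ∑ q ∈ Q j, ∑ i ∈ I, ∑ p ∈ P i, f i p j q :=
          Finset.sum_congr rfl fun j _ => Finset.sum_comm

set_option maxHeartbeats 2000000 in
lemma antipode_mul_aux {ι ι' : Type*} {κ Λ : ι → Type*} {κ' Λ' : ι' → Type*}
    {a b : H} (ra : Repr k a ι) (rb : Repr k b ι')
    (ra1 : ∀ i : ι, Repr k (ra.left i) (κ i)) (ra2 : ∀ i : ι, Repr k (ra.right i) (Λ i))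
    (rb1 : ∀ j : ι', Repr k (rb.left j) (κ' j)) (rb2 : ∀ j : ι', Repr k (rb.right j) (Λ' j)) :
    S (a * b) = S b * S a := by
  have way1 :
      (∑ i ∈ ra.index, ∑ p ∈ (ra2 i).index, ∑ j ∈ rb.index, ∑ q ∈ (rb2 j).index,
        S (ra.left i * rb.left j) *
          ((ra2 i).left p * ((rb2 j).left q * (S ((rb2 j).right q) * S ((ra2 i).right p)))))
      = S (a * b) := by
    calc
      ∑ i ∈ ra.index, ∑ p ∈ (ra2 i).index, ∑ j ∈ rb.index, ∑ q ∈ (rb2 j).index,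
          S (ra.left i * rb.left j) *
            ((ra2 i).left p * ((rb2 j).left q * (S ((rb2 j).right q) * S ((ra2 i).right p))))
          = ∑ i ∈ ra.index, ∑ p ∈ (ra2 i).index, ∑ j ∈ rb.index,
              S (ra.left i * rb.left j) *
                ((ra2 i).left p * (ε (rb.right j) • S ((ra2 i).right p))) := by
            refine Finset.sum_congr rfl fun i _ => Finset.sum_congr rfl fun p _ =>
              Finset.sum_congr rfl fun j _ => ?_
            rw [← Finset.mul_sum, ← Finset.mul_sum, sandwich_lr (rb2 j)]
      _ = ∑ i ∈ ra.index, ∑ p ∈ (ra2 i).index,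
            S (ra.left i * b) * ((ra2 i).left p * S ((ra2 i).right p)) := by
            refine Finset.sum_congr rfl fun i _ => Finset.sum_congr rfl fun p _ => ?_
            have hb := sum_counit_right_smul rb (S ∘ₗ LinearMap.mulLeft k (ra.left i))
            simp only [LinearMap.comp_apply, LinearMap.mulLeft_apply] at hb
            calc
              ∑ j ∈ rb.index, S (ra.left i * rb.left j) *
                  ((ra2 i).left p * (ε (rb.right j) • S ((ra2 i).right p)))
                  = ∑ j ∈ rb.index, (ε (rb.right j) • S (ra.left i * rb.left j)) *
                      ((ra2 i).left p * S ((ra2 i).right p)) := by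
                    refine Finset.sum_congr rfl fun j _ => ?_
                    rw [mul_smul_comm, mul_smul_comm, smul_mul_assoc]
              _ = S (ra.left i * b) * ((ra2 i).left p * S ((ra2 i).right p)) := by
                    rw [← Finset.sum_mul]
                    rw [hb]
      _ = ∑ i ∈ ra.index, ε (ra.right i) • S (ra.left i * b) := by
            refine Finset.sum_congr rfl fun i _ => ?_
            rw [← Finset.mul_sum, HopfAlgebra.sum_mul_antipode_eq_smul (ra2 i),
              mul_smul_comm, mul_one]
      _ = S (a * b) := by
            have := sum_counit_right_smul ra (S ∘ₗ LinearMap.mulRight k b)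
            simpa only [LinearMap.comp_apply, LinearMap.mulRight_apply] using this
  have way2 :
      (∑ i ∈ ra.index, ∑ p ∈ (ra2 i).index, ∑ j ∈ rb.index, ∑ q ∈ (rb2 j).index,
        S (ra.left i * rb.left j) *
          ((ra2 i).left p * ((rb2 j).left q * (S ((rb2 j).right q) * S ((ra2 i).right p)))))
      = S b * S a := by
    calc
      ∑ i ∈ ra.index, ∑ p ∈ (ra2 i).index, ∑ j ∈ rb.index, ∑ q ∈ (rb2 j).index,
          S (ra.left i * rb.left j) *
            ((ra2 i).left p * ((rb2 j).left q * (S ((rb2 j).right q) * S ((ra2 i).right p))))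
          = ∑ j ∈ rb.index, ∑ q ∈ (rb2 j).index, ∑ i ∈ ra.index, ∑ p ∈ (ra2 i).index,
              S (ra.left i * rb.left j) *
                ((ra2 i).left p * ((rb2 j).left q * (S ((rb2 j).right q) * S ((ra2 i).right p)))) :=
            sum4_swap _ _ _ _ _
      _ = ∑ j ∈ rb.index, ∑ q ∈ (rb2 j).index, ∑ i ∈ ra.index, ∑ p ∈ (ra1 i).index,
              S ((ra1 i).left p * rb.left j) *
                ((ra1 i).right p * ((rb2 j).left q * (S ((rb2 j).right q) * S (ra.right i)))) := by
            refine Finset.sum_congr rfl fun j _ => Finset.sum_congr rfl fun q _ => ?_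
            have := (coassoc_transport ra ra1 ra2
              (trip (S ∘ₗ LinearMap.mulRight k (rb.left j)) LinearMap.id
                (LinearMap.mulLeft k ((rb2 j).left q) ∘ₗ
                  LinearMap.mulLeft k (S ((rb2 j).right q)) ∘ₗ S))).symm
            simpa only [trip_tmul, LinearMap.comp_apply, LinearMap.mulRight_apply,
              LinearMap.mulLeft_apply, LinearMap.id_apply] using this
      _ = ∑ i ∈ ra.index, ∑ p ∈ (ra1 i).index, ∑ j ∈ rb.index, ∑ q ∈ (rb2 j).index,
              S ((ra1 i).left p * rb.left j) *
                ((ra1 i).right p * ((rb2 j).left q * (S ((rb2 j).right q) * S (ra.right i)))) :=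
            sum4_swap rb.index (fun j => (rb2 j).index) ra.index (fun i => (ra1 i).index)
              (fun j q i p => S ((ra1 i).left p * rb.left j) *
                ((ra1 i).right p * ((rb2 j).left q * (S ((rb2 j).right q) * S (ra.right i)))))
      _ = ∑ i ∈ ra.index, ∑ p ∈ (ra1 i).index, ∑ j ∈ rb.index, ∑ q ∈ (rb1 j).index,
              S ((ra1 i).left p * (rb1 j).left q) *
                (((ra1 i).right p * (rb1 j).right q) * (S (rb.right j) * S (ra.right i))) := by
            refine Finset.sum_congr rfl fun i _ => Finset.sum_congr rfl fun p _ => ?_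
            have := (coassoc_transport rb rb1 rb2
              (trip (S ∘ₗ LinearMap.mulLeft k ((ra1 i).left p))
                (LinearMap.mulLeft k ((ra1 i).right p))
                (LinearMap.mulRight k (S (ra.right i)) ∘ₗ S))).symm
            simp only [trip_tmul, LinearMap.comp_apply, LinearMap.mulRight_apply,
              LinearMap.mulLeft_apply] at this
            calc
              ∑ j ∈ rb.index, ∑ q ∈ (rb2 j).index,
                  S ((ra1 i).left p * rb.left j) *
                    ((ra1 i).right p * ((rb2 j).left q * (S ((rb2 j).right q) * S (ra.right i))))
                  = ∑ j ∈ rb.index, ∑ q ∈ (rb2 j).index,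
                      S ((ra1 i).left p * rb.left j) *
                        ((ra1 i).right p * (rb2 j).left q *
                          (S ((rb2 j).right q) * S (ra.right i))) := by
                    refine Finset.sum_congr rfl fun j _ => Finset.sum_congr rfl fun q _ => ?_
                    rw [mul_assoc ((ra1 i).right p)]
              _ = ∑ j ∈ rb.index, ∑ q ∈ (rb1 j).index,
                      S ((ra1 i).left p * (rb1 j).left q) *
                        ((ra1 i).right p * (rb1 j).right q *
                          (S (rb.right j) * S (ra.right i))) := this
      _ = ∑ i ∈ ra.index, ∑ j ∈ rb.index, ∑ p ∈ (ra1 i).index, ∑ q ∈ (rb1 j).index,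
              S ((ra1 i).left p * (rb1 j).left q) *
                (((ra1 i).right p * (rb1 j).right q) * (S (rb.right j) * S (ra.right i))) :=
            Finset.sum_congr rfl fun i _ => Finset.sum_comm
      _ = ∑ i ∈ ra.index, ∑ j ∈ rb.index,
              ε (ra.left i * rb.left j) • (S (rb.right j) * S (ra.right i)) := by
            refine Finset.sum_congr rfl fun i _ => Finset.sum_congr rfl fun j _ => ?_
            rw [← Finset.sum_product']
            exact sandwich_rl (Repr.mulRepr (ra1 i) (rb1 j)) _
      _ = ∑ i ∈ ra.index, ε (ra.left i) • (S b * S (ra.right i)) := by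
            refine Finset.sum_congr rfl fun i _ => ?_
            have hb := sum_counit_left_smul rb (LinearMap.mulRight k (S (ra.right i)) ∘ₗ S)
            simp only [LinearMap.comp_apply, LinearMap.mulRight_apply] at hb
            calc
              ∑ j ∈ rb.index, ε (ra.left i * rb.left j) • (S (rb.right j) * S (ra.right i))
                  = ∑ j ∈ rb.index, ε (ra.left i) •
                      (ε (rb.left j) • (S (rb.right j) * S (ra.right i))) := by
                    refine Finset.sum_congr rfl fun j _ => ?_
                    rw [Bialgebra.counit_mul, mul_smul]
              _ = ε (ra.left i) • (S b * S (ra.right i)) := by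
                    rw [← Finset.smul_sum, hb]
      _ = S b * S a := by
            have := sum_counit_left_smul ra (LinearMap.mulLeft k (S b) ∘ₗ S)
            simpa only [LinearMap.comp_apply, LinearMap.mulLeft_apply] using this
  rw [← way1, way2]

lemma myantipode_mul (a b : H) : S (a * b) = S b * S a :=
  antipode_mul_aux (Repr.arbitrary k a) (Repr.arbitrary k b)
    (fun i => Repr.arbitrary k _) (fun i => Repr.arbitrary k _)
    (fun j => Repr.arbitrary k _) (fun j => Repr.arbitrary k _)

/-- `F φ (a ⊗ b) = φ a • b`. -/
def Fphi (φ : H →ₗ[k] k) : H ⊗[k] H →ₗ[k] H :=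
  TensorProduct.lift ((LinearMap.lsmul k H).comp φ)

@[simp] lemma Fphi_tmul (φ : H →ₗ[k] k) (a b : H) : Fphi φ (a ⊗ₜ[k] b) = φ a • b := rfl

lemma PhiP_eq_Fphi (φ : H →ₗ[k] k) (P : H ⊗[k] H) :
    (TensorProduct.lid k H) (TensorProduct.map φ LinearMap.id P) = Fphi φ P := by
  induction P using TensorProduct.induction_on with
  | zero => simp
  | tmul a b => simp
  | add u v hu hv => simp [map_add, hu, hv]

lemma Fphi_mul_right (φ : H →ₗ[k] k) (t : H ⊗[k] H) (x : H) :
    Fphi φ (t * (1 ⊗ₜ[k] x)) = Fphi φ t * x := by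
  induction t using TensorProduct.induction_on with
  | zero => simp
  | tmul a b => simp [Algebra.TensorProduct.tmul_mul_tmul, smul_mul_assoc]
  | add u v hu hv => simp [add_mul, map_add, hu, hv]

lemma Fphi_mul_left (φ : H →ₗ[k] k) (t : H ⊗[k] H) (x : H) :
    Fphi φ ((1 ⊗ₜ[k] x) * t) = x * Fphi φ t := by
  induction t using TensorProduct.induction_on with
  | zero => simp
  | tmul a b => simp [Algebra.TensorProduct.tmul_mul_tmul, mul_smul_comm]
  | add u v hu hv => simp [mul_add, map_add, hu, hv]

lemma Fphi_trace_move (φ : H →ₗ[k] k) (hφ : ∀ a b : H, φ (a * b) = φ (b * a))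
    (t : H ⊗[k] H) (y : H) :
    Fphi φ (t * (y ⊗ₜ[k] 1)) = Fphi φ ((y ⊗ₜ[k] 1) * t) := by
  induction t using TensorProduct.induction_on with
  | zero => simp
  | tmul a b => simp [Algebra.TensorProduct.tmul_mul_tmul, hφ a y]
  | add u v hu hv => simp [add_mul, mul_add, map_add, hu, hv]

lemma comm_mul (u v : H ⊗[k] H) :
    TensorProduct.comm k H H (u * v) =
      TensorProduct.comm k H H u * TensorProduct.comm k H H v := by
  have key : ∀ t : H ⊗[k] H,
      TensorProduct.comm k H H t = Algebra.TensorProduct.comm k H H t := by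
    intro t
    induction t using TensorProduct.induction_on with
    | zero => simp
    | tmul a b => simp
    | add u v hu hv => simp [map_add, hu, hv]
  rw [key, key, key, map_mul]

/-- Lemma A: `Q = R₂₁ R` commutes with the image of `Δ`. -/
lemma Q_comul_comm (R : H ⊗[k] H)
    (hcomm : ∀ h : H, R * Δ h = (TensorProduct.comm k H H (Δ h)) * R) (h : H) :
    (TensorProduct.comm k H H R * R) * Δ h = Δ h * (TensorProduct.comm k H H R * R) := by
  have h1 : TensorProduct.comm k H H R * TensorProduct.comm k H H (Δ h)
      = Δ h * TensorProduct.comm k H H R := by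
    have h2 : ∀ t : H ⊗[k] H,
        TensorProduct.comm k H H (TensorProduct.comm k H H t) = t := by
      intro t
      induction t using TensorProduct.induction_on with
      | zero => simp
      | tmul a b => simp
      | add u v hu hv => simp [map_add, hu, hv]
    have := congrArg (TensorProduct.comm k H H) (hcomm h)
    rw [comm_mul, comm_mul, h2] at this
    exact this
  calc (TensorProduct.comm k H H R * R) * Δ h
      = TensorProduct.comm k H H R * (R * Δ h) := mul_assoc _ _ _
    _ = TensorProduct.comm k H H R * (TensorProduct.comm k H H (Δ h) * R) := by rw [hcomm]
    _ = (TensorProduct.comm k H H R * TensorProduct.comm k H H (Δ h)) * R :=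
        (mul_assoc _ _ _).symm
    _ = (Δ h * TensorProduct.comm k H H R) * R := by rw [h1]
    _ = Δ h * (TensorProduct.comm k H H R * R) := mul_assoc _ _ _

def pairMap (ρ : H ⊗[k] H →ₗ[k] H) : H ⊗[k] (H ⊗[k] H) →ₗ[k] H ⊗[k] H :=
  TensorProduct.map ρ LinearMap.id ∘ₗ (TensorProduct.assoc k H H H).symm.toLinearMap

@[simp] lemma pairMap_tmul (ρ : H ⊗[k] H →ₗ[k] H) (u v w : H) :
    pairMap ρ (u ⊗ₜ[k] (v ⊗ₜ[k] w)) = ρ (u ⊗ₜ[k] v) ⊗ₜ[k] w := by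
  simp [pairMap]


lemma pair_transport (ρ : H ⊗[k] H →ₗ[k] H) (u0 : H)
    {ι : Type*} {κ Λ : ι → Type*}
    {x : H} (rx : Repr k x ι) (rx1 : ∀ i : ι, Repr k (rx.left i) (κ i))
    (rx2 : ∀ i : ι, Repr k (rx.right i) (Λ i))
    (hρ : ∀ i ∈ rx.index,
      ∑ p ∈ (rx1 i).index, ρ ((rx1 i).left p ⊗ₜ[k] (rx1 i).right p) = ε (rx.left i) • u0) :
    ∑ i ∈ rx.index, ∑ p ∈ (rx2 i).index,
      ρ (rx.left i ⊗ₜ[k] (rx2 i).left p) ⊗ₜ[k] (rx2 i).right p = u0 ⊗ₜ[k] x := by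
  calc
    ∑ i ∈ rx.index, ∑ p ∈ (rx2 i).index,
        ρ (rx.left i ⊗ₜ[k] (rx2 i).left p) ⊗ₜ[k] (rx2 i).right p
        = ∑ i ∈ rx.index, ∑ p ∈ (rx2 i).index,
            pairMap ρ (rx.left i ⊗ₜ[k] ((rx2 i).left p ⊗ₜ[k] (rx2 i).right p)) := by
          refine Finset.sum_congr rfl fun i _ => Finset.sum_congr rfl fun p _ => ?_
          rw [pairMap_tmul]
    _ = ∑ i ∈ rx.index, ∑ p ∈ (rx1 i).index,
            pairMap ρ ((rx1 i).left p ⊗ₜ[k] ((rx1 i).right p ⊗ₜ[k] rx.right i)) :=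
          (coassoc_transport rx rx1 rx2 (pairMap ρ)).symm
    _ = ∑ i ∈ rx.index, ∑ p ∈ (rx1 i).index,
            ρ ((rx1 i).left p ⊗ₜ[k] (rx1 i).right p) ⊗ₜ[k] rx.right i := by
          refine Finset.sum_congr rfl fun i _ => Finset.sum_congr rfl fun p _ => ?_
          rw [pairMap_tmul]
    _ = ∑ i ∈ rx.index, (ε (rx.left i) • u0) ⊗ₜ[k] rx.right i := by
          refine Finset.sum_congr rfl fun i hi => ?_
          rw [← TensorProduct.sum_tmul, hρ i hi]
    _ = u0 ⊗ₜ[k] x := by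
          calc
            ∑ i ∈ rx.index, (ε (rx.left i) • u0) ⊗ₜ[k] rx.right i
                = u0 ⊗ₜ[k] (∑ i ∈ rx.index, ε (rx.left i) • rx.right i) := by
              rw [TensorProduct.tmul_sum]
              exact Finset.sum_congr rfl fun i _ => TensorProduct.smul_tmul _ _ _
            _ = u0 ⊗ₜ[k] x := by rw [sum_counit_smul_right rx]

lemma rho1_collapse (g : H) {ι : Type*} {c : H} (rc : Repr k c ι) :
    ∑ p ∈ rc.index,
      (LinearMap.mulLeft k g ∘ₗ S ∘ₗ μ ∘ₗ TensorProduct.map LinearMap.id S)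
        (rc.left p ⊗ₜ[k] rc.right p) = ε c • g := by
  have h0 := HopfAlgebra.sum_mul_antipode_eq_smul rc
  calc
    ∑ p ∈ rc.index,
        (LinearMap.mulLeft k g ∘ₗ S ∘ₗ μ ∘ₗ TensorProduct.map LinearMap.id S)
          (rc.left p ⊗ₜ[k] rc.right p)
        = ∑ p ∈ rc.index, g * S (rc.left p * S (rc.right p)) := by
          refine Finset.sum_congr rfl fun p _ => ?_
          simp [LinearMap.mul'_apply]
    _ = g * S (∑ p ∈ rc.index, rc.left p * S (rc.right p)) := by
          rw [map_sum, Finset.mul_sum]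
    _ = ε c • g := by
          rw [h0, map_smul, myantipode_one, mul_smul_comm, mul_one]

lemma rho2_collapse {ι : Type*} {c : H} (rc : Repr k c ι) :
    ∑ p ∈ rc.index,
      (μ ∘ₗ TensorProduct.map S LinearMap.id) (rc.left p ⊗ₜ[k] rc.right p) = ε c • (1 : H) := by
  have h0 := HopfAlgebra.sum_antipode_mul_eq_smul rc
  calc
    ∑ p ∈ rc.index,
        (μ ∘ₗ TensorProduct.map S LinearMap.id) (rc.left p ⊗ₜ[k] rc.right p)
        = ∑ p ∈ rc.index, S (rc.left p) * rc.right p := by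
          refine Finset.sum_congr rfl fun p _ => ?_
          simp [LinearMap.mul'_apply]
    _ = ε c • (1 : H) := h0

lemma central_lemma (R : H ⊗[k] H)
    (hcomm : ∀ h : H, R * Δ h = (TensorProduct.comm k H H (Δ h)) * R)
    (g : H) (hg3 : ∀ h : H, g * S (S h) = h * g)
    (φ : H →ₗ[k] k) (hφ : ∀ a b : H, φ (a * b) = φ (b * a)) (x : H) :
    Fphi φ (TensorProduct.comm k H H R * R * (g ⊗ₜ[k] 1)) * x
      = x * Fphi φ (TensorProduct.comm k H H R * R * (g ⊗ₜ[k] 1)) := by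
  set Q := TensorProduct.comm k H H R * R with hQdef
  have hQ : ∀ h : H, Q * Δ h = Δ h * Q := Q_comul_comm R hcomm
  set rx := Repr.arbitrary k x with hrx
  set rx1 : ∀ i : H × H, Repr k (rx.left i) (H × H) := fun i => Repr.arbitrary k _ with hrx1
  set rx2 : ∀ i : H × H, Repr k (rx.right i) (H × H) := fun i => Repr.arbitrary k _ with hrx2
  have I1 : ∑ i ∈ rx.index, Δ (rx.right i) * ((g * S (rx.left i)) ⊗ₜ[k] (1 : H))
      = g ⊗ₜ[k] x := by
    calc
      ∑ i ∈ rx.index, Δ (rx.right i) * ((g * S (rx.left i)) ⊗ₜ[k] (1 : H))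
          = ∑ i ∈ rx.index, ∑ p ∈ (rx2 i).index,
              ((rx2 i).left p * (g * S (rx.left i))) ⊗ₜ[k] ((rx2 i).right p * 1) := by
            refine Finset.sum_congr rfl fun i _ => ?_
            rw [← (rx2 i).eq, Finset.sum_mul]
            exact Finset.sum_congr rfl fun p _ => Algebra.TensorProduct.tmul_mul_tmul ..
      _ = ∑ i ∈ rx.index, ∑ p ∈ (rx2 i).index,
              (LinearMap.mulLeft k g ∘ₗ S ∘ₗ μ ∘ₗ TensorProduct.map LinearMap.id S)
                (rx.left i ⊗ₜ[k] (rx2 i).left p) ⊗ₜ[k] (rx2 i).right p := by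
            refine Finset.sum_congr rfl fun i _ => Finset.sum_congr rfl fun p _ => ?_
            rw [mul_one]
            congr 1
            have : (LinearMap.mulLeft k g ∘ₗ S ∘ₗ μ ∘ₗ TensorProduct.map LinearMap.id S)
                (rx.left i ⊗ₜ[k] (rx2 i).left p) = g * S (rx.left i * S ((rx2 i).left p)) := by
              simp [LinearMap.mul'_apply]
            rw [this]
            calc
              (rx2 i).left p * (g * S (rx.left i))
                  = ((rx2 i).left p * g) * S (rx.left i) := (mul_assoc _ _ _).symm
              _ = (g * S (S ((rx2 i).left p))) * S (rx.left i) := by rw [hg3]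
              _ = g * (S (S ((rx2 i).left p)) * S (rx.left i)) := mul_assoc _ _ _
              _ = g * S (rx.left i * S ((rx2 i).left p)) := by rw [myantipode_mul]
      _ = g ⊗ₜ[k] x := pair_transport _ g rx rx1 rx2 (fun i _ => rho1_collapse g (rx1 i))
  have I2 : ∑ i ∈ rx.index, ((S (rx.left i)) ⊗ₜ[k] (1 : H)) * Δ (rx.right i)
      = (1 : H) ⊗ₜ[k] x := by
    calc
      ∑ i ∈ rx.index, ((S (rx.left i)) ⊗ₜ[k] (1 : H)) * Δ (rx.right i)
          = ∑ i ∈ rx.index, ∑ p ∈ (rx2 i).index,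
              (S (rx.left i) * (rx2 i).left p) ⊗ₜ[k] (1 * (rx2 i).right p) := by
            refine Finset.sum_congr rfl fun i _ => ?_
            rw [← (rx2 i).eq, Finset.mul_sum]
            exact Finset.sum_congr rfl fun p _ => Algebra.TensorProduct.tmul_mul_tmul ..
      _ = ∑ i ∈ rx.index, ∑ p ∈ (rx2 i).index,
              (μ ∘ₗ TensorProduct.map S LinearMap.id)
                (rx.left i ⊗ₜ[k] (rx2 i).left p) ⊗ₜ[k] (rx2 i).right p := by
            refine Finset.sum_congr rfl fun i _ => Finset.sum_congr rfl fun p _ => ?_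
            rw [one_mul]
            simp [LinearMap.mul'_apply]
      _ = (1 : H) ⊗ₜ[k] x := pair_transport _ 1 rx rx1 rx2 (fun i _ => rho2_collapse (rx1 i))
  calc
    Fphi φ (Q * (g ⊗ₜ[k] 1)) * x
        = Fphi φ (Q * (g ⊗ₜ[k] 1) * ((1 : H) ⊗ₜ[k] x)) := (Fphi_mul_right φ _ x).symm
    _ = Fphi φ (Q * (g ⊗ₜ[k] x)) := by
          rw [mul_assoc]
          congr 2
          rw [Algebra.TensorProduct.tmul_mul_tmul, mul_one, one_mul]
    _ = ∑ i ∈ rx.index,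
          Fphi φ ((S (rx.left i) ⊗ₜ[k] (1 : H)) * (Δ (rx.right i) * (Q * (g ⊗ₜ[k] 1)))) := by
          rw [← I1, Finset.mul_sum, map_sum]
          refine Finset.sum_congr rfl fun i _ => ?_
          have e0 : ((g * S (rx.left i)) ⊗ₜ[k] (1 : H))
              = (g ⊗ₜ[k] (1 : H)) * (S (rx.left i) ⊗ₜ[k] (1 : H)) := by
            rw [Algebra.TensorProduct.tmul_mul_tmul, one_mul]
          have e1 : Q * (Δ (rx.right i) * ((g * S (rx.left i)) ⊗ₜ[k] (1 : H)))
              = (Δ (rx.right i) * (Q * (g ⊗ₜ[k] 1))) * (S (rx.left i) ⊗ₜ[k] (1 : H)) := by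
            rw [e0, ← mul_assoc, hQ (rx.right i)]
            simp only [mul_assoc]
          rw [e1, Fphi_trace_move φ hφ]
    _ = Fphi φ ((∑ i ∈ rx.index, (S (rx.left i) ⊗ₜ[k] (1 : H)) * Δ (rx.right i))
          * (Q * (g ⊗ₜ[k] 1))) := by
          rw [Finset.sum_mul, map_sum]
          exact Finset.sum_congr rfl fun i _ => by rw [← mul_assoc]
    _ = Fphi φ (((1 : H) ⊗ₜ[k] x) * (Q * (g ⊗ₜ[k] 1))) := by rw [I2]
    _ = x * Fphi φ (Q * (g ⊗ₜ[k] 1)) := Fphi_mul_left φ _ x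

def e1m : H ⊗[k] H →ₗ[k] (H ⊗[k] H) ⊗[k] H :=
  TensorProduct.map ((TensorProduct.mk k H H).flip 1) LinearMap.id

def e2m : H ⊗[k] H →ₗ[k] (H ⊗[k] H) ⊗[k] H :=
  TensorProduct.map (TensorProduct.mk k H H 1) LinearMap.id

def Dm : H ⊗[k] H →ₗ[k] (H ⊗[k] H) ⊗[k] H :=
  TensorProduct.map Δ LinearMap.id

@[simp] lemma e1m_tmul (a b : H) :
    (e1m : H ⊗[k] H →ₗ[k] (H ⊗[k] H) ⊗[k] H) (a ⊗ₜ[k] b) = (a ⊗ₜ[k] (1 : H)) ⊗ₜ[k] b := by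
  simp [e1m]

@[simp] lemma e2m_tmul (a b : H) :
    (e2m : H ⊗[k] H →ₗ[k] (H ⊗[k] H) ⊗[k] H) (a ⊗ₜ[k] b) = ((1 : H) ⊗ₜ[k] a) ⊗ₜ[k] b := by
  simp [e2m]

@[simp] lemma Dm_tmul (a b : H) :
    (Dm : H ⊗[k] H →ₗ[k] (H ⊗[k] H) ⊗[k] H) (a ⊗ₜ[k] b) = (Δ a) ⊗ₜ[k] b := by
  simp [Dm]

lemma map_id_mul (f : H →ₗ[k] H ⊗[k] H) (hf : ∀ a c : H, f (a * c) = f a * f c)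
    (u v : H ⊗[k] H) :
    TensorProduct.map f (LinearMap.id : H →ₗ[k] H) (u * v)
      = TensorProduct.map f LinearMap.id u * TensorProduct.map f LinearMap.id v := by
  induction u using TensorProduct.induction_on with
  | zero => simp
  | add u1 u2 h1 h2 => simp [add_mul, map_add, h1, h2]
  | tmul a b =>
    induction v using TensorProduct.induction_on with
    | zero => simp
    | add v1 v2 h1 h2 => simp [mul_add, map_add, h1, h2]
    | tmul c d =>
      rw [Algebra.TensorProduct.tmul_mul_tmul]
      simp only [TensorProduct.map_tmul, LinearMap.id_coe, id_eq]
      rw [hf, Algebra.TensorProduct.tmul_mul_tmul]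

lemma e1m_mul (u v : H ⊗[k] H) : (e1m : H ⊗[k] H →ₗ[k] _) (u * v) = e1m u * e1m v :=
  map_id_mul _ (fun a c => by
    simp only [LinearMap.flip_apply, TensorProduct.mk_apply,
      Algebra.TensorProduct.tmul_mul_tmul, mul_one]) u v

lemma e2m_mul (u v : H ⊗[k] H) : (e2m : H ⊗[k] H →ₗ[k] _) (u * v) = e2m u * e2m v :=
  map_id_mul _ (fun a c => by
    simp only [TensorProduct.mk_apply,
      Algebra.TensorProduct.tmul_mul_tmul, mul_one]) u v

lemma Dm_mul (u v : H ⊗[k] H) : (Dm : H ⊗[k] H →ₗ[k] _) (u * v) = Dm u * Dm v :=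
  map_id_mul _ (fun a c => Bialgebra.comul_mul a c) u v

set_option synthInstance.maxHeartbeats 1000000 in
lemma comm2_mul (u v : H ⊗[k] (H ⊗[k] H)) :
    TensorProduct.comm k H (H ⊗[k] H) (u * v)
      = TensorProduct.comm k H (H ⊗[k] H) u * TensorProduct.comm k H (H ⊗[k] H) v := by
  have key : ∀ t : H ⊗[k] (H ⊗[k] H),
      TensorProduct.comm k H (H ⊗[k] H) t = Algebra.TensorProduct.comm k H (H ⊗[k] H) t := by
    intro t
    induction t using TensorProduct.induction_on with
    | zero => simp
    | tmul a b => simp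
    | add u v hu hv => simp [map_add, hu, hv]
  rw [key, key, key, map_mul]

set_option synthInstance.maxHeartbeats 1000000 in
lemma comm2_natural (f : H →ₗ[k] H ⊗[k] H) (t : H ⊗[k] H) :
    TensorProduct.comm k H (H ⊗[k] H) (TensorProduct.map LinearMap.id f t)
      = TensorProduct.map f LinearMap.id (TensorProduct.comm k H H t) := by
  induction t using TensorProduct.induction_on with
  | zero => simp
  | tmul a b => simp
  | add u v hu hv => simp [map_add, hu, hv]

lemma ce2 (w : H ⊗[k] H) (y : H) :
    (e2m : H ⊗[k] H →ₗ[k] _) w * ((y ⊗ₜ[k] (1 : H)) ⊗ₜ[k] (1 : H))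
      = ((y ⊗ₜ[k] (1 : H)) ⊗ₜ[k] (1 : H)) * e2m w := by
  induction w using TensorProduct.induction_on with
  | zero => simp
  | add w1 w2 h1 h2 => simp [add_mul, mul_add, map_add, h1, h2]
  | tmul a b =>
    simp only [e2m_tmul, Algebra.TensorProduct.tmul_mul_tmul, one_mul, mul_one]

lemma Cphi_e2_left (φ : H →ₗ[k] k) (u : H ⊗[k] H) (t : (H ⊗[k] H) ⊗[k] H) :
    TensorProduct.map (Fphi φ) LinearMap.id ((e2m u) * t)
      = u * TensorProduct.map (Fphi φ) LinearMap.id t := by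
  induction t using TensorProduct.induction_on with
  | zero => simp
  | add t1 t2 h1 h2 => simp [mul_add, map_add, h1, h2]
  | tmul w c =>
    induction u using TensorProduct.induction_on with
    | zero => simp
    | add u1 u2 h1 h2 => simp [add_mul, map_add, h1, h2]
    | tmul m n =>
      induction w using TensorProduct.induction_on with
      | zero => simp
      | add w1 w2 h1 h2 =>
          rw [TensorProduct.add_tmul, mul_add, map_add, h1, h2, map_add, mul_add]
      | tmul a b =>
        simp only [e2m_tmul, Algebra.TensorProduct.tmul_mul_tmul, one_mul,
          TensorProduct.map_tmul, LinearMap.id_coe, id_eq, Fphi_tmul]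
        rw [mul_smul_comm]

lemma Cphi_e2_right (φ : H →ₗ[k] k) (t : (H ⊗[k] H) ⊗[k] H) (v : H ⊗[k] H) :
    TensorProduct.map (Fphi φ) LinearMap.id (t * e2m v)
      = TensorProduct.map (Fphi φ) LinearMap.id t * v := by
  induction t using TensorProduct.induction_on with
  | zero => simp
  | add t1 t2 h1 h2 => simp [add_mul, map_add, h1, h2]
  | tmul w c =>
    induction v using TensorProduct.induction_on with
    | zero => simp
    | add v1 v2 h1 h2 => simp [mul_add, map_add, h1, h2]
    | tmul m n =>
      induction w using TensorProduct.induction_on with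
      | zero => simp
      | add w1 w2 h1 h2 =>
          rw [TensorProduct.add_tmul, add_mul, map_add, h1, h2, map_add, add_mul]
      | tmul a b =>
        simp only [e2m_tmul, Algebra.TensorProduct.tmul_mul_tmul, mul_one,
          TensorProduct.map_tmul, LinearMap.id_coe, id_eq, Fphi_tmul]
        rw [smul_mul_assoc]

lemma Cphi_e1 (φ : H →ₗ[k] k) (w : H ⊗[k] H) :
    TensorProduct.map (Fphi φ) LinearMap.id ((e1m : H ⊗[k] H →ₗ[k] _) w)
      = (1 : H) ⊗ₜ[k] Fphi φ w := by
  induction w using TensorProduct.induction_on with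
  | zero => simp
  | add w1 w2 h1 h2 => simp [map_add, h1, h2, TensorProduct.tmul_add]
  | tmul a b =>
    simp only [e1m_tmul, TensorProduct.map_tmul, LinearMap.id_coe, id_eq, Fphi_tmul]
    rw [TensorProduct.smul_tmul]

lemma central_move {z : H} (hz : ∀ a : H, z * a = a * z) (t : H ⊗[k] H) :
    t * ((1 : H) ⊗ₜ[k] z) = ((1 : H) ⊗ₜ[k] z) * t := by
  induction t using TensorProduct.induction_on with
  | zero => simp
  | add t1 t2 h1 h2 => simp [add_mul, mul_add, h1, h2]
  | tmul a b => simp [Algebra.TensorProduct.tmul_mul_tmul, hz b]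

lemma conv_contract (φ ψ : H →ₗ[k] k) (w : H ⊗[k] H) :
    Fphi ψ (TensorProduct.map (Fphi φ) LinearMap.id ((Dm : H ⊗[k] H →ₗ[k] _) w))
      = Fphi (conv k H φ ψ) w := by
  induction w using TensorProduct.induction_on with
  | zero => simp
  | add w1 w2 h1 h2 => simp [map_add, h1, h2]
  | tmul a b =>
    simp only [Dm_tmul, TensorProduct.map_tmul, LinearMap.id_coe, id_eq, Fphi_tmul]
    have key : ∀ t : H ⊗[k] H, ψ (Fphi φ t) = LinearMap.mul' k k (TensorProduct.map φ ψ t) := by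
      intro t
      induction t using TensorProduct.induction_on with
      | zero => simp
      | add t1 t2 h1 h2 => simp [map_add, h1, h2]
      | tmul c d => simp [LinearMap.mul'_apply, smul_eq_mul, mul_comm]
    congr 1
    rw [key]
    rfl

lemma mult_lemma (R : H ⊗[k] H)
    (hcomm : ∀ h : H, R * Δ h = (TensorProduct.comm k H H (Δ h)) * R)
    (hΔ1 : (Dm : H ⊗[k] H →ₗ[k] _) R = e1m R * e2m R)
    (hΔ2 : TensorProduct.map LinearMap.id Δ R =
      TensorProduct.map LinearMap.id (TensorProduct.mk k H H 1) R *
        TensorProduct.map LinearMap.id ((TensorProduct.mk k H H).flip 1) R)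
    (g : H) (hg1 : Δ g = g ⊗ₜ[k] g) (hg3 : ∀ h : H, g * S (S h) = h * g)
    (φ ψ : H →ₗ[k] k) (hφ : ∀ a b : H, φ (a * b) = φ (b * a)) :
    Fphi (conv k H φ ψ) (TensorProduct.comm k H H R * R * (g ⊗ₜ[k] 1))
      = Fphi φ (TensorProduct.comm k H H R * R * (g ⊗ₜ[k] 1)) *
          Fphi ψ (TensorProduct.comm k H H R * R * (g ⊗ₜ[k] 1)) := by
  set τR := TensorProduct.comm k H H R with hτdef
  set z := Fphi φ (τR * R * (g ⊗ₜ[k] 1)) with hzdef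
  have hzc : ∀ a : H, z * a = a * z := central_lemma R hcomm g hg3 φ hφ
  have hDτ : (Dm : H ⊗[k] H →ₗ[k] _) τR = e2m τR * e1m τR := by
    have h := congrArg (TensorProduct.comm k H (H ⊗[k] H)) hΔ2
    rw [comm2_mul, comm2_natural, comm2_natural, comm2_natural] at h
    exact h
  have hG1 : ((g ⊗ₜ[k] (1 : H)) ⊗ₜ[k] (1 : H)) = (e1m : H ⊗[k] H →ₗ[k] _) (g ⊗ₜ[k] 1) := by
    simp
  have hG2 : (((1 : H) ⊗ₜ[k] g) ⊗ₜ[k] (1 : H)) = (e2m : H ⊗[k] H →ₗ[k] _) (g ⊗ₜ[k] 1) := by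
    simp
  have hDP : (Dm : H ⊗[k] H →ₗ[k] _) (τR * R * (g ⊗ₜ[k] 1))
      = e2m τR * (e1m (τR * R * (g ⊗ₜ[k] 1)) * e2m (R * (g ⊗ₜ[k] 1))) := by
    calc
      (Dm : H ⊗[k] H →ₗ[k] _) (τR * R * (g ⊗ₜ[k] 1))
          = Dm τR * Dm R * Dm (g ⊗ₜ[k] 1) := by rw [Dm_mul, Dm_mul]
      _ = (e2m τR * e1m τR) * (e1m R * e2m R) * ((g ⊗ₜ[k] g) ⊗ₜ[k] (1 : H)) := by
            rw [hDτ, hΔ1]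
            congr 1
            simp [hg1]
      _ = (e2m τR * e1m τR) * (e1m R * e2m R) *
            (((g ⊗ₜ[k] (1 : H)) ⊗ₜ[k] (1 : H)) * (((1 : H) ⊗ₜ[k] g) ⊗ₜ[k] (1 : H))) := by
            rw [Algebra.TensorProduct.tmul_mul_tmul, Algebra.TensorProduct.tmul_mul_tmul,
              mul_one, one_mul, mul_one]
      _ = e2m τR * e1m τR * e1m R *
            (e2m R * ((g ⊗ₜ[k] (1 : H)) ⊗ₜ[k] (1 : H))) * (((1 : H) ⊗ₜ[k] g) ⊗ₜ[k] (1 : H)) := by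
            noncomm_ring
      _ = e2m τR * e1m τR * e1m R *
            (((g ⊗ₜ[k] (1 : H)) ⊗ₜ[k] (1 : H)) * e2m R) * (((1 : H) ⊗ₜ[k] g) ⊗ₜ[k] (1 : H)) := by
            rw [ce2]
      _ = e2m τR * ((e1m τR * e1m R) * ((g ⊗ₜ[k] (1 : H)) ⊗ₜ[k] (1 : H))) *
            (e2m R * (((1 : H) ⊗ₜ[k] g) ⊗ₜ[k] (1 : H))) := by
            noncomm_ring
      _ = e2m τR * (e1m (τR * R * (g ⊗ₜ[k] 1)) * e2m (R * (g ⊗ₜ[k] 1))) := by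
            rw [hG1, hG2, ← e1m_mul, ← e2m_mul, ← e1m_mul]
            noncomm_ring
  calc
    Fphi (conv k H φ ψ) (τR * R * (g ⊗ₜ[k] 1))
        = Fphi ψ (TensorProduct.map (Fphi φ) LinearMap.id
            ((Dm : H ⊗[k] H →ₗ[k] _) (τR * R * (g ⊗ₜ[k] 1)))) := (conv_contract φ ψ _).symm
    _ = Fphi ψ (TensorProduct.map (Fphi φ) LinearMap.id
          (e2m τR * (e1m (τR * R * (g ⊗ₜ[k] 1)) * e2m (R * (g ⊗ₜ[k] 1))))) := by rw [hDP]
    _ = Fphi ψ (τR * (TensorProduct.map (Fphi φ) LinearMap.id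
          (e1m (τR * R * (g ⊗ₜ[k] 1)) * e2m (R * (g ⊗ₜ[k] 1))))) := by rw [Cphi_e2_left]
    _ = Fphi ψ (τR * (TensorProduct.map (Fphi φ) LinearMap.id
          (e1m (τR * R * (g ⊗ₜ[k] 1))) * (R * (g ⊗ₜ[k] 1)))) := by rw [Cphi_e2_right]
    _ = Fphi ψ (τR * (((1 : H) ⊗ₜ[k] z) * (R * (g ⊗ₜ[k] 1)))) := by rw [Cphi_e1]
    _ = Fphi ψ (((1 : H) ⊗ₜ[k] z) * (τR * R * (g ⊗ₜ[k] 1))) := by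
          rw [← mul_assoc, central_move hzc τR]
          noncomm_ring
    _ = z * Fphi ψ (τR * R * (g ⊗ₜ[k] 1)) := Fphi_mul_left ψ _ z

lemma PhiP_eq (P : H ⊗[k] H) (ξ : H →ₗ[k] k) : PhiP k H P ξ = Fphi ξ P :=
  PhiP_eq_Fphi ξ P

end Aux

theorem stmt19 (k H : Type*) [Field k] [Ring H] [HopfAlgebra k H]
    (R : H ⊗[k] H) (hunit : IsUnit R)
    (hcomm : ∀ h : H,
      R * Coalgebra.comul h = (TensorProduct.comm k H H (Coalgebra.comul h)) * R)
    (hΔ1 : TensorProduct.map Coalgebra.comul LinearMap.id R =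
      TensorProduct.map ((TensorProduct.mk k H H).flip 1) LinearMap.id R *
        TensorProduct.map (TensorProduct.mk k H H 1) LinearMap.id R)
    (hΔ2 : TensorProduct.map LinearMap.id Coalgebra.comul R =
      TensorProduct.map LinearMap.id (TensorProduct.mk k H H 1) R *
        TensorProduct.map LinearMap.id ((TensorProduct.mk k H H).flip 1) R)
    (hS : R * TensorProduct.map (antip k H) LinearMap.id R = 1)
    (g : H) (hg1 : Coalgebra.comul (R := k) g = g ⊗ₜ[k] g)
    (hg2 : Coalgebra.counit (R := k) g = (1 : k))
    (hg3 : ∀ h : H, g * antipSq k H h = h * g) :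
    ∀ φ ψ : H →ₗ[k] k,
      (∀ a b : H, φ (a * b) = φ (b * a)) →
      (∀ a b : H, ψ (a * b) = ψ (b * a)) →
      (∀ a : H,
        PhiP k H ((TensorProduct.comm k H H R) * R * (g ⊗ₜ[k] 1)) φ * a =
          a * PhiP k H ((TensorProduct.comm k H H R) * R * (g ⊗ₜ[k] 1)) φ) ∧
      PhiP k H ((TensorProduct.comm k H H R) * R * (g ⊗ₜ[k] 1)) (conv k H φ ψ) =
        PhiP k H ((TensorProduct.comm k H H R) * R * (g ⊗ₜ[k] 1)) φ *
          PhiP k H ((TensorProduct.comm k H H R) * R * (g ⊗ₜ[k] 1)) ψ := by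
  intro φ ψ hφ hψ
  have hg3' : ∀ h : H,
      g * HopfAlgebra.antipode (R := k) (HopfAlgebra.antipode (R := k) h) = h * g :=
    fun h => hg3 h
  constructor
  · intro a
    rw [PhiP_eq]
    exact central_lemma R hcomm g hg3' φ hφ a
  · rw [PhiP_eq, PhiP_eq, PhiP_eq]
    exact mult_lemma R hcomm hΔ1 hΔ2 g hg1 hg3' φ ψ hφ
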